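/- The Fischer-Ladner closure of a finite set of modal μ-calculus formulas is finite. -/
import Mathlib


/-- Formulas of the modal μ-calculus in negation normal form. -/
inductive Formula : Type
  | atom : ℕ → Formula
  | natom : ℕ → Formula
  | or : Formula → Formula → Formula
  | and : Formula → Formula → Formula
  | dia : Formula → Formula
  | box : Formula → Formula
  | mu : ℕ → Formula → Formula
  | nu : ℕ → Formula → Formula
  deriving DecidableEq

namespace Formula

/-- free variables -/
def fv : Formula → Finset ℕ
  | atom p => {p}
  | natom p => {p}
  | or φ ψ => fv φ ∪ fv ψ
  | and φ ψ => fv φ ∪ fv ψ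
  | dia φ => fv φ
  | box φ => fv φ
  | mu x φ => fv φ \ {x}
  | nu x φ => fv φ \ {x}

/-- bound variables -/
def bv : Formula → Finset ℕ
  | atom _ => ∅
  | natom _ => ∅
  | or φ ψ => bv φ ∪ bv ψ
  | and φ ψ => bv φ ∪ bv ψ
  | dia φ => bv φ
  | box φ => bv φ
  | mu x φ => insert x (bv φ)
  | nu x φ => insert x (bv φ)

/-- the multiset of variables bound by binders (with multiplicity) -/
def binders : Formula → Multiset ℕ
  | atom _ => 0
  | natom _ => 0
  | or φ ψ => binders φ + binders ψ
  | and φ ψ => binders φ + binders ψ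
  | dia φ => binders φ
  | box φ => binders φ
  | mu x φ => x ::ₘ binders φ
  | nu x φ => x ::ₘ binders φ

/-- negation, keeping the variables in `X` fixed (used under fixpoint binders, where
`∼ηx.φ := η̄x.∼φ[¬x/x]`, so that the double negation on `x` cancels). -/
def negF : Finset ℕ → Formula → Formula
  | X, atom p => if p ∈ X then atom p else natom p
  | X, natom p => if p ∈ X then natom p else atom p
  | X, or φ ψ => and (negF X φ) (negF X ψ)
  | X, and φ ψ => or (negF X φ) (negF X ψ)
  | X, dia φ => box (negF X φ)
  | X, box φ => dia (negF X φ)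
  | X, mu x φ => nu x (negF (insert x X) φ)
  | X, nu x φ => mu x (negF (insert x X) φ)

/-- the negation operator `∼` on negation normal forms -/
def neg : Formula → Formula := negF ∅

/-- substitution of `ψ` for the variable `x` (formulas are assumed tidy, so that
no capture occurs; at negative occurrences the negation of `ψ` is substituted). -/
def subst : Formula → ℕ → Formula → Formula
  | atom p, x, ψ => if p = x then ψ else atom p
  | natom p, x, ψ => if p = x then neg ψ else natom p
  | or φ₁ φ₂, x, ψ => or (subst φ₁ x ψ) (subst φ₂ x ψ)
  | and φ₁ φ₂, x, ψ => and (subst φ₁ x ψ) (subst φ₂ x ψ)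
  | dia φ, x, ψ => dia (subst φ x ψ)
  | box φ, x, ψ => box (subst φ x ψ)
  | mu y φ, x, ψ => if y = x then mu y φ else mu y (subst φ x ψ)
  | nu y φ, x, ψ => if y = x then nu y φ else nu y (subst φ x ψ)

def bot : Formula := and (atom 0) (natom 0)
def top : Formula := or (atom 0) (natom 0)
def impl (φ ψ : Formula) : Formula := or (neg φ) ψ
def iffF (φ ψ : Formula) : Formula := and (impl φ ψ) (impl ψ φ)

end Formula

open Formula

/-- the Fischer-Ladner closure (as an inductively defined predicate) -/
inductive FL (Φ : Set Formula) : Formula → Prop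
  | base : ∀ {φ}, φ ∈ Φ → FL Φ φ
  | natom : ∀ {p}, FL Φ (.natom p) → FL Φ (.atom p)
  | orL : ∀ {φ ψ}, FL Φ (.or φ ψ) → FL Φ φ
  | orR : ∀ {φ ψ}, FL Φ (.or φ ψ) → FL Φ ψ
  | andL : ∀ {φ ψ}, FL Φ (.and φ ψ) → FL Φ φ
  | andR : ∀ {φ ψ}, FL Φ (.and φ ψ) → FL Φ ψ
  | dia : ∀ {φ}, FL Φ (.dia φ) → FL Φ φ
  | box : ∀ {φ}, FL Φ (.box φ) → FL Φ φ
  | mu : ∀ {x φ}, FL Φ (.mu x φ) → FL Φ (subst φ x (.mu x φ))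
  | nu : ∀ {x φ}, FL Φ (.nu x φ) → FL Φ (subst φ x (.nu x φ))

/-- `Cl Φ` : the FL-closure of `Φ` -/
def Cl (Φ : Set Formula) : Set Formula := {φ | FL Φ φ}

def FLClosed (Sg : Set Formula) : Prop := ∀ φ, FL Sg φ → φ ∈ Sg

/-- the subformula relation `⊴` -/
inductive Subf : Formula → Formula → Prop
  | refl : ∀ φ, Subf φ φ
  | orL : ∀ {φ ψ₁ ψ₂}, Subf φ ψ₁ → Subf φ (.or ψ₁ ψ₂)
  | orR : ∀ {φ ψ₁ ψ₂}, Subf φ ψ₂ → Subf φ (.or ψ₁ ψ₂)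
  | andL : ∀ {φ ψ₁ ψ₂}, Subf φ ψ₁ → Subf φ (.and ψ₁ ψ₂)
  | andR : ∀ {φ ψ₁ ψ₂}, Subf φ ψ₂ → Subf φ (.and ψ₁ ψ₂)
  | dia : ∀ {φ ψ}, Subf φ ψ → Subf φ (.dia ψ)
  | box : ∀ {φ ψ}, Subf φ ψ → Subf φ (.box ψ)
  | mu : ∀ {φ x ψ}, Subf φ ψ → Subf φ (.mu x ψ)
  | nu : ∀ {φ x ψ}, Subf φ ψ → Subf φ (.nu x ψ)

/-- strict subformula `⊲` -/
def SSubf (φ ψ : Formula) : Prop := Subf φ ψ ∧ φ ≠ ψ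

/-- a formula is tidy if its free and bound variables are disjoint -/
def Tidy (φ : Formula) : Prop := Disjoint (fv φ) (bv φ)

/-- a formula is clean if it is tidy and every bound variable has a unique binder -/
def Clean (φ : Formula) : Prop := Tidy φ ∧ (binders φ).Nodup

/-- `x` has binder `μ` in `ξ` -/
def MuVar (ξ : Formula) (x : ℕ) : Prop := ∃ δ, Subf (.mu x δ) ξ
/-- `x` has binder `ν` in `ξ` -/
def NuVar (ξ : Formula) (x : ℕ) : Prop := ∃ δ, Subf (.nu x δ) ξ

/-- base of the dependency order: `x <_ξ y` whenever `δ_x ⊲ δ_y` and `y ⊲ δ_x` -/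
def depBase (ξ : Formula) (x y : ℕ) : Prop :=
  ∃ δx δy : Formula,
    (Subf (.mu x δx) ξ ∨ Subf (.nu x δx) ξ) ∧
    (Subf (.mu y δy) ξ ∨ Subf (.nu y δy) ξ) ∧
    SSubf δx δy ∧ SSubf (.atom y) δx

/-- the dependency order `<_ξ` : the least strict partial order containing `depBase` -/
def dep (ξ : Formula) : ℕ → ℕ → Prop := Relation.TransGen (depBase ξ)

mutual
  /-- membership in the continuous modal μ-calculus `μ_cML` -/
  inductive MuC : Formula → Prop
    | atom : ∀ p, MuC (.atom p)
    | natom : ∀ p, MuC (.natom p)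
    | or : ∀ {φ ψ}, MuC φ → MuC ψ → MuC (.or φ ψ)
    | and : ∀ {φ ψ}, MuC φ → MuC ψ → MuC (.and φ ψ)
    | dia : ∀ {φ}, MuC φ → MuC (.dia φ)
    | box : ∀ {φ}, MuC φ → MuC (.box φ)
    | mu : ∀ {x φ}, ContIn ({x} : Set ℕ) φ → MuC (.mu x φ)
    | nu : ∀ {x φ}, CoconIn ({x} : Set ℕ) φ → MuC (.nu x φ)
  /-- the fragment of `μ_cML`-formulas continuous in `X` -/
  inductive ContIn : Set ℕ → Formula → Prop
    | var : ∀ {X x}, x ∈ X → ContIn X (.atom x)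
    | free : ∀ {X α}, MuC α → (∀ x ∈ X, x ∉ fv α) → ContIn X α
    | or : ∀ {X φ ψ}, ContIn X φ → ContIn X ψ → ContIn X (.or φ ψ)
    | and : ∀ {X φ ψ}, ContIn X φ → ContIn X ψ → ContIn X (.and φ ψ)
    | dia : ∀ {X φ}, ContIn X φ → ContIn X (.dia φ)
    | mu : ∀ {X y φ}, ContIn (insert y X) φ → ContIn X (.mu y φ)
  /-- the fragment of `μ_cML`-formulas cocontinuous in `X` -/
  inductive CoconIn : Set ℕ → Formula → Prop
    | var : ∀ {X x}, x ∈ X → CoconIn X (.atom x)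
    | free : ∀ {X α}, MuC α → (∀ x ∈ X, x ∉ fv α) → CoconIn X α
    | or : ∀ {X φ ψ}, CoconIn X φ → CoconIn X ψ → CoconIn X (.or φ ψ)
    | and : ∀ {X φ ψ}, CoconIn X φ → CoconIn X ψ → CoconIn X (.and φ ψ)
    | box : ∀ {X φ}, CoconIn X φ → CoconIn X (.box φ)
    | nu : ∀ {X y φ}, CoconIn (insert y X) φ → CoconIn X (.nu y φ)
end

/-- a basic modal formula: no fixpoint operators -/
def IsBasic : Formula → Prop
  | .or φ ψ => IsBasic φ ∧ IsBasic ψ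
  | .and φ ψ => IsBasic φ ∧ IsBasic ψ
  | .dia φ => IsBasic φ
  | .box φ => IsBasic φ
  | .mu _ _ => False
  | .nu _ _ => False
  | _ => True

/- ########  Semantics  ######## -/

/-- algebraic semantics: the meaning of a formula, relative to a valuation -/
def sem {S : Type} (R : S → S → Prop) : Formula → (ℕ → Set S) → Set S
  | .atom p, V => V p
  | .natom p, V => (V p)ᶜ
  | .or φ ψ, V => sem R φ V ∪ sem R ψ V
  | .and φ ψ, V => sem R φ V ∩ sem R ψ V
  | .dia φ, V => {s | ∃ t, R s t ∧ t ∈ sem R φ V}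
  | .box φ, V => {s | ∀ t, R s t → t ∈ sem R φ V}
  | .mu x φ, V => ⋂₀ {X : Set S | sem R φ (Function.update V x X) ⊆ X}
  | .nu x φ, V => ⋃₀ {X : Set S | X ⊆ sem R φ (Function.update V x X)}

/-- Kripke models -/
structure KModel where
  S : Type
  R : S → S → Prop
  V : ℕ → Set S

/-- Kripke frames -/
structure KFrame where
  S : Type
  R : S → S → Prop

def sat (M : KModel) (s : M.S) (φ : Formula) : Prop := s ∈ sem M.R φ M.V

def validM (M : KModel) (φ : Formula) : Prop := ∀ s, sat M s φ

def validF (F : KFrame) (φ : Formula) : Prop := ∀ (V : ℕ → Set F.S) (s : F.S), s ∈ sem F.R φ V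

def frameOf (M : KModel) : KFrame := ⟨M.S, M.R⟩

/- ########  Filtration  ######## -/

/-- Σ-equivalence: satisfying the same formulas of `Sg` -/
def fEquiv (M : KModel) (Sg : Finset Formula) : Setoid M.S :=
  ⟨fun s t => ∀ φ ∈ Sg, (sat M s φ ↔ sat M t φ),
   ⟨fun _ _ _ => Iff.rfl, fun h φ hφ => (h φ hφ).symm,
    fun h1 h2 φ hφ => (h1 φ hφ).trans (h2 φ hφ)⟩⟩

def FStates (M : KModel) (Sg : Finset Formula) : Type := Quotient (fEquiv M Sg)

def fcls (M : KModel) (Sg : Finset Formula) (s : M.S) : FStates M Sg :=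
  Quotient.mk (fEquiv M Sg) s

/-- a filtration of `M` through `Sg`: a relation between `R^min` and `R^max`,
with the induced valuation on atoms of `Sg` -/
structure Filtration (M : KModel) (Sg : Finset Formula) where
  R' : FStates M Sg → FStates M Sg → Prop
  V' : ℕ → Set (FStates M Sg)
  rmin : ∀ s t : M.S, M.R s t → R' (fcls M Sg s) (fcls M Sg t)
  rmax : ∀ s t : M.S, R' (fcls M Sg s) (fcls M Sg t) →
      ∀ φ, Formula.box φ ∈ Sg → sat M s (.box φ) → sat M t φ
  hv : ∀ p, Formula.atom p ∈ Sg → ∀ s : M.S, (fcls M Sg s ∈ V' p ↔ s ∈ M.V p)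

def filtModel (M : KModel) (Sg : Finset Formula) (F : Filtration M Sg) : KModel :=
  ⟨FStates M Sg, F.R', F.V'⟩

/-- a class of models admits filtration with respect to a language `D` -/
def AdmFilt (Mcl : KModel → Prop) (D : Formula → Prop) : Prop :=
  ∀ M, Mcl M → ∀ Sg : Finset Formula, FLClosed ↑Sg → (∀ φ ∈ Sg, D φ) →
    ∃ F : Filtration M Sg, Mcl (filtModel M Sg F)

/- ########  Proof systems  ######## -/

/-- propositional evaluation (modal/fixpoint formulas treated as atoms) -/
def beval (v : Formula → Bool) : Formula → Bool
  | .atom p => v (.atom p)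
  | .natom p => !v (.atom p)
  | .or φ ψ => beval v φ || beval v ψ
  | .and φ ψ => beval v φ && beval v ψ
  | φ => v φ

/-- the basic normal modal logic axiomatised by `Ax` -/
inductive BPrf (Ax : Set Formula) : Formula → Prop
  | ax : ∀ {φ}, φ ∈ Ax → BPrf Ax φ
  | taut : ∀ {φ}, (∀ v, beval v φ = true) → BPrf Ax φ
  | norm : BPrf Ax (neg (.dia bot))
  | addL : ∀ {φ ψ}, BPrf Ax (impl (.dia (.or φ ψ)) (.or (.dia φ) (.dia ψ)))
  | addR : ∀ {φ ψ}, BPrf Ax (impl (.or (.dia φ) (.dia ψ)) (.dia (.or φ ψ)))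
  | dual1 : ∀ {φ}, BPrf Ax (impl (.dia φ) (neg (.box (neg φ))))
  | dual2 : ∀ {φ}, BPrf Ax (impl (neg (.box (neg φ))) (.dia φ))
  | mp : ∀ {φ ψ}, BPrf Ax (impl φ ψ) → BPrf Ax φ → BPrf Ax ψ
  | mono : ∀ {φ ψ}, BPrf Ax (impl φ ψ) → BPrf Ax (impl (.dia φ) (.dia ψ))
  | monoBox : ∀ {φ ψ}, BPrf Ax (impl φ ψ) → BPrf Ax (impl (.box φ) (.box ψ))
  | nec : ∀ {φ}, BPrf Ax φ → BPrf Ax (.box φ)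
  | usubst : ∀ {φ x ψ}, BPrf Ax φ → BPrf Ax (subst φ x ψ)

/-- the μ_c-logic axiomatised by `Ax` : the least extension of `μ_c K` by the axioms
`Ax` closed under the rules -/
inductive Prf (Ax : Set Formula) : Formula → Prop
  | ax : ∀ {φ}, φ ∈ Ax → Prf Ax φ
  | taut : ∀ {φ}, (∀ v, beval v φ = true) → Prf Ax φ
  | norm : Prf Ax (neg (.dia bot))
  | addL : ∀ {φ ψ}, Prf Ax (impl (.dia (.or φ ψ)) (.or (.dia φ) (.dia ψ)))
  | addR : ∀ {φ ψ}, Prf Ax (impl (.or (.dia φ) (.dia ψ)) (.dia (.or φ ψ)))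
  | dual1 : ∀ {φ}, Prf Ax (impl (.dia φ) (neg (.box (neg φ))))
  | dual2 : ∀ {φ}, Prf Ax (impl (neg (.box (neg φ))) (.dia φ))
  | mp : ∀ {φ ψ}, Prf Ax (impl φ ψ) → Prf Ax φ → Prf Ax ψ
  | mono : ∀ {φ ψ}, Prf Ax (impl φ ψ) → Prf Ax (impl (.dia φ) (.dia ψ))
  | monoBox : ∀ {φ ψ}, Prf Ax (impl φ ψ) → Prf Ax (impl (.box φ) (.box ψ))
  | nec : ∀ {φ}, Prf Ax φ → Prf Ax (.box φ)
  | usubst : ∀ {φ x ψ}, Prf Ax φ → Prf Ax (subst φ x ψ)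
  | prefixAx : ∀ {x φ}, ContIn ({x} : Set ℕ) φ → Prf Ax (impl (subst φ x (.mu x φ)) (.mu x φ))
  | lfp : ∀ {x φ γ}, ContIn ({x} : Set ℕ) φ → Prf Ax (impl (subst φ x γ) γ) → Prf Ax (impl (.mu x φ) γ)
  | postfixAx : ∀ {x φ}, CoconIn ({x} : Set ℕ) φ → Prf Ax (impl (.nu x φ) (subst φ x (.nu x φ)))
  | gfp : ∀ {x φ γ}, CoconIn ({x} : Set ℕ) φ → Prf Ax (impl γ (subst φ x γ)) → Prf Ax (impl γ (.nu x φ))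

/- ########  Consistency and (finitary) canonical models  ######## -/

def conjList : List Formula → Formula
  | [] => top
  | φ :: l => .and φ (conjList l)

/-- `Γ` is inconsistent wrt a provability predicate `P` -/
def Incons (P : Formula → Prop) (Γ : Set Formula) : Prop :=
  ∃ l : List Formula, (∀ φ ∈ l, φ ∈ Γ) ∧ P (impl (conjList l) bot)

def Cons (P : Formula → Prop) (Γ : Set Formula) : Prop := ¬ Incons P Γ

def MaxCons (P : Formula → Prop) (Γ : Set Formula) : Prop :=
  Cons P Γ ∧ ∀ Γ' : Set Formula, Γ ⊂ Γ' → Incons P Γ'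

/-- consistency of a single formula -/
def ConsF (P : Formula → Prop) (φ : Formula) : Prop := Cons P {φ}

/-- `ψ_A` : the conjunction of a finite set of formulas -/
noncomputable def conjF (A : Finset Formula) : Formula := conjList A.toList

/-- `ψ_U` : the disjunction of the conjunctions of the members of `U` -/
noncomputable def disjF (U : Finset (Finset Formula)) : Formula :=
  (U.toList.map conjF).foldr .or bot

/-- `∼`-closed and FL-closed -/
def NegFLClosed (Sg : Finset Formula) : Prop :=
  FLClosed ↑Sg ∧ ∀ φ ∈ Sg, neg φ ∈ Sg

/-- the states of a model over `Sg` : intersections of maximally consistent sets with `Sg` -/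
def States (P : Formula → Prop) (Sg : Finset Formula) : Set (Finset Formula) :=
  {A | ∃ Γ : Set Formula, MaxCons P Γ ∧ ↑A = Γ ∩ ↑Sg}

/-- a model over `Sg` with respect to the logic `P` -/
structure ModelOver (P : Formula → Prop) (Sg : Finset Formula) where
  R : Finset Formula → Finset Formula → Prop
  rmin : ∀ A ∈ States P Sg, ∀ B ∈ States P Sg,
      ConsF P (.and (conjF A) (.dia (conjF B))) → R A B
  rmax : ∀ A ∈ States P Sg, ∀ B ∈ States P Sg, R A B →
      ∀ φ, Formula.box φ ∈ Sg → Formula.box φ ∈ A → φ ∈ B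

/-- the Kripke model induced by a model over `Sg` -/
noncomputable def modelOf (P : Formula → Prop) (Sg : Finset Formula)
    (M : ModelOver P Sg) : KModel :=
  ⟨{A : Finset Formula // A ∈ States P Sg}, fun A B => M.R A.1 B.1,
   fun p => {A | Formula.atom p ∈ A.1}⟩

/-- the canonical frame of the logic `P` -/
def canFrame (P : Formula → Prop) : KFrame :=
  ⟨{Γ : Set Formula // MaxCons P Γ}, fun Γ Δ => ∀ φ, Formula.box φ ∈ Γ.1 → φ ∈ Δ.1⟩

/-- the canonical model of the logic `P`, with an arbitrary valuation `V` -/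
def canModelWith (P : Formula → Prop) (V : ℕ → Set {Γ : Set Formula // MaxCons P Γ}) :
    KModel :=
  ⟨{Γ : Set Formula // MaxCons P Γ}, fun Γ Δ => ∀ φ, Formula.box φ ∈ Γ.1 → φ ∈ Δ.1, V⟩

/-- the canonical model of the logic `P` -/
def canModel (P : Formula → Prop) : KModel :=
  canModelWith P (fun p => {Γ | Formula.atom p ∈ Γ.1})

/- ########  Expansions and name-expansions  ######## -/

/-- iterated substitution `φ[β₁/x₁]⋯[βₙ/xₙ]` -/
def expandBy : List (ℕ × Formula) → Formula → Formula
  | [], φ => φ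
  | (x, β) :: l, φ => expandBy l (subst φ x β)

/-- an enumeration of the bound variables of `ξ`, paired with their fixpoint formulas,
respecting the dependency order -/
structure GoodEnum (ξ : Formula) (l : List (ℕ × Formula)) : Prop where
  nodup : (l.map Prod.fst).Nodup
  mem : ∀ x, x ∈ l.map Prod.fst ↔ x ∈ bv ξ
  bind : ∀ p ∈ l, (∃ δ, p.2 = Formula.mu p.1 δ ∧ Subf p.2 ξ) ∨
                  (∃ δ, p.2 = Formula.nu p.1 δ ∧ Subf p.2 ξ)
  resp : ∀ i j : Fin l.length, dep ξ (l.get i).1 (l.get j).1 → (i : ℕ) < (j : ℕ)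

/-- the body `δ` of a fixpoint formula `ηx.δ` -/
def body : Formula → Formula
  | .mu _ δ => δ
  | .nu _ δ => δ
  | φ => φ

/-- name-expansion: substitute `u x` for each bound variable `x` in the list -/
def nexpBy (u : ℕ → Formula) : List ℕ → Formula → Formula
  | [], φ => φ
  | x :: l, φ => nexpBy u l (subst φ x (u x))

-- development on top of context
open Formula

namespace FLfin

/-- one-step Fischer-Ladner transition -/
inductive step : Formula → Formula → Prop
  | natom (p) : step (.natom p) (.atom p)
  | orL (φ ψ) : step (.or φ ψ) φ
  | orR (φ ψ) : step (.or φ ψ) ψ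
  | andL (φ ψ) : step (.and φ ψ) φ
  | andR (φ ψ) : step (.and φ ψ) ψ
  | dia (φ) : step (.dia φ) φ
  | box (φ) : step (.box φ) φ
  | mu (x φ) : step (.mu x φ) (subst φ x (.mu x φ))
  | nu (x φ) : step (.nu x φ) (subst φ x (.nu x φ))

theorem FL_iff_reach {Φ : Set Formula} {ψ : Formula} :
    FL Φ ψ ↔ ∃ φ ∈ Φ, Relation.ReflTransGen step φ ψ := by
  constructor
  · intro h
    induction h with
    | base h => exact ⟨_, h, .refl⟩
    | natom _ ih => exact ih.imp fun φ ⟨h1, h2⟩ => ⟨h1, h2.tail (.natom _)⟩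
    | orL _ ih => exact ih.imp fun φ ⟨h1, h2⟩ => ⟨h1, h2.tail (.orL _ _)⟩
    | orR _ ih => exact ih.imp fun φ ⟨h1, h2⟩ => ⟨h1, h2.tail (.orR _ _)⟩
    | andL _ ih => exact ih.imp fun φ ⟨h1, h2⟩ => ⟨h1, h2.tail (.andL _ _)⟩
    | andR _ ih => exact ih.imp fun φ ⟨h1, h2⟩ => ⟨h1, h2.tail (.andR _ _)⟩
    | dia _ ih => exact ih.imp fun φ ⟨h1, h2⟩ => ⟨h1, h2.tail (.dia _)⟩
    | box _ ih => exact ih.imp fun φ ⟨h1, h2⟩ => ⟨h1, h2.tail (.box _)⟩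
    | mu _ ih => exact ih.imp fun φ ⟨h1, h2⟩ => ⟨h1, h2.tail (.mu _ _)⟩
    | nu _ ih => exact ih.imp fun φ ⟨h1, h2⟩ => ⟨h1, h2.tail (.nu _ _)⟩
  · rintro ⟨φ, hφ, h⟩
    induction h with
    | refl => exact .base hφ
    | tail _ hs ih =>
      cases hs with
      | natom => exact .natom ih
      | orL => exact .orL ih
      | orR => exact .orR ih
      | andL => exact .andL ih
      | andR => exact .andR ih
      | dia => exact .dia ih
      | box => exact .box ih
      | mu => exact .mu ih
      | nu => exact .nu ih

/-- the set of one-step successors is finite -/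
theorem step_finite (φ : Formula) : {ψ | step φ ψ}.Finite := by
  cases φ with
  | atom p => exact Set.Finite.subset (Set.finite_empty) (by rintro ψ ⟨⟩)
  | natom p => exact Set.Finite.subset (Set.finite_singleton (Formula.atom p)) (by rintro ψ ⟨⟩; rfl)
  | or a b => exact Set.Finite.subset ((Set.finite_singleton b).insert a) (by rintro ψ ⟨⟩ <;> simp)
  | and a b => exact Set.Finite.subset ((Set.finite_singleton b).insert a) (by rintro ψ ⟨⟩ <;> simp)
  | dia a => exact Set.Finite.subset (Set.finite_singleton a) (by rintro ψ ⟨⟩; rfl)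
  | box a => exact Set.Finite.subset (Set.finite_singleton a) (by rintro ψ ⟨⟩; rfl)
  | mu x a => exact Set.Finite.subset (Set.finite_singleton (subst a x (.mu x a))) (by rintro ψ ⟨⟩; rfl)
  | nu x a => exact Set.Finite.subset (Set.finite_singleton (subst a x (.nu x a))) (by rintro ψ ⟨⟩; rfl)


/-! ### fv lemmas -/

theorem fv_negF (X : Finset ℕ) (t : Formula) : fv (negF X t) = fv t := by
  induction t generalizing X with
  | atom p => by_cases h : p ∈ X <;> simp [negF, fv, h]
  | natom p => by_cases h : p ∈ X <;> simp [negF, fv, h]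
  | or a b iha ihb => simp [negF, fv, iha, ihb]
  | and a b iha ihb => simp [negF, fv, iha, ihb]
  | dia a ih => simp [negF, fv, ih]
  | box a ih => simp [negF, fv, ih]
  | mu x a ih => simp [negF, fv, ih]
  | nu x a ih => simp [negF, fv, ih]

theorem fv_neg (t : Formula) : fv (neg t) = fv t := fv_negF ∅ t

theorem subst_fv_subset (t : Formula) (x : ℕ) (v : Formula) :
    fv (subst t x v) ⊆ (fv t \ {x}) ∪ fv v := by
  induction t with
  | atom p =>
    by_cases h : p = x
    · simp [subst, h]
    · simp only [subst, if_neg h, fv]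
      intro q hq
      simp at hq
      subst hq
      exact Finset.mem_union_left _ (by simp [Finset.mem_sdiff, fv, h])
  | natom p =>
    by_cases h : p = x
    · simp [subst, h, fv_neg]
    · simp only [subst, if_neg h, fv]
      intro q hq
      simp at hq
      subst hq
      exact Finset.mem_union_left _ (by simp [Finset.mem_sdiff, fv, h])
  | or a b iha ihb =>
    simp only [subst, fv]
    intro q hq
    rcases Finset.mem_union.1 hq with h | h
    · rcases Finset.mem_union.1 (iha h) with h | h
      · exact Finset.mem_union_left _ (by simp_all [Finset.mem_sdiff])
      · exact Finset.mem_union_right _ h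
    · rcases Finset.mem_union.1 (ihb h) with h | h
      · exact Finset.mem_union_left _ (by simp_all [Finset.mem_sdiff])
      · exact Finset.mem_union_right _ h
  | and a b iha ihb =>
    simp only [subst, fv]
    intro q hq
    rcases Finset.mem_union.1 hq with h | h
    · rcases Finset.mem_union.1 (iha h) with h | h
      · exact Finset.mem_union_left _ (by simp_all [Finset.mem_sdiff])
      · exact Finset.mem_union_right _ h
    · rcases Finset.mem_union.1 (ihb h) with h | h
      · exact Finset.mem_union_left _ (by simp_all [Finset.mem_sdiff])
      · exact Finset.mem_union_right _ h
  | dia a ih => simpa [subst, fv] using ih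
  | box a ih => simpa [subst, fv] using ih
  | mu y a ih =>
    by_cases h : y = x
    · subst h
      simp only [subst, if_pos rfl]
      intro q hq
      exact Finset.mem_union_left _ (by simpa [fv] using hq)
    · simp only [subst, h, if_neg, fv]
      intro q hq
      rcases Finset.mem_sdiff.1 hq with ⟨h1, h2⟩
      rcases Finset.mem_union.1 (ih h1) with h3 | h3
      · exact Finset.mem_union_left _ (by simp_all [Finset.mem_sdiff, fv])
      · exact Finset.mem_union_right _ h3
  | nu y a ih =>
    by_cases h : y = x
    · subst h
      simp only [subst, if_pos rfl]
      intro q hq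
      exact Finset.mem_union_left _ (by simpa [fv] using hq)
    · simp only [subst, h, if_neg, fv]
      intro q hq
      rcases Finset.mem_sdiff.1 hq with ⟨h1, h2⟩
      rcases Finset.mem_union.1 (ih h1) with h3 | h3
      · exact Finset.mem_union_left _ (by simp_all [Finset.mem_sdiff, fv])
      · exact Finset.mem_union_right _ h3

theorem subst_of_not_mem_fv {t : Formula} {x : ℕ} (v : Formula) (h : x ∉ fv t) :
    subst t x v = t := by
  induction t with
  | atom p => simp [fv] at h; simp [subst, Ne.symm h]
  | natom p => simp [fv] at h; simp [subst, Ne.symm h]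
  | or a b iha ihb =>
    simp [fv] at h
    simp [subst, iha h.1, ihb h.2]
  | and a b iha ihb =>
    simp [fv] at h
    simp [subst, iha h.1, ihb h.2]
  | dia a ih => simp [fv] at h; simp [subst, ih h]
  | box a ih => simp [fv] at h; simp [subst, ih h]
  | mu y a ih =>
    by_cases hyx : y = x
    · simp [subst, hyx]
    · have : x ∉ fv a := by
        intro hx
        exact h (by simp [fv, Finset.mem_sdiff, hx, Ne.symm hyx])
      simp [subst, hyx, ih this]
  | nu y a ih =>
    by_cases hyx : y = x
    · simp [subst, hyx]
    · have : x ∉ fv a := by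
        intro hx
        exact h (by simp [fv, Finset.mem_sdiff, hx, Ne.symm hyx])
      simp [subst, hyx, ih this]

theorem step_fv_subset {m s : Formula} (h : step m s) : fv s ⊆ fv m := by
  cases h with
  | natom p => simp [fv]
  | orL a b => simp [fv, Finset.subset_union_left]
  | orR a b => simp [fv, Finset.subset_union_right]
  | andL a b => simp [fv, Finset.subset_union_left]
  | andR a b => simp [fv, Finset.subset_union_right]
  | dia a => simp [fv]
  | box a => simp [fv]
  | mu x a =>
    intro q hq
    rcases Finset.mem_union.1 (subst_fv_subset a x (.mu x a) hq) with h | h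
    · simpa [fv] using h
    · exact h
  | nu x a =>
    intro q hq
    rcases Finset.mem_union.1 (subst_fv_subset a x (.nu x a) hq) with h | h
    · simpa [fv] using h
    · exact h


/-! ### instance sets and the closure over-approximation -/

/-- all "instances" of a base formula: connectives may be dualised, literals may change
sign, and free literal occurrences of a variable may be replaced (per occurrence) by a
value from `V`. -/
def inst : Formula → (ℕ → Finset Formula) → Finset Formula
  | .atom p, V => {.atom p, .natom p} ∪ V p
  | .natom p, V => {.atom p, .natom p} ∪ V p
  | .or a b, V => ((inst a V) ×ˢ (inst b V)).image (fun q => .or q.1 q.2) ∪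
      ((inst a V) ×ˢ (inst b V)).image (fun q => .and q.1 q.2)
  | .and a b, V => ((inst a V) ×ˢ (inst b V)).image (fun q => .or q.1 q.2) ∪
      ((inst a V) ×ˢ (inst b V)).image (fun q => .and q.1 q.2)
  | .dia a, V => (inst a V).image .dia ∪ (inst a V).image .box
  | .box a, V => (inst a V).image .dia ∪ (inst a V).image .box
  | .mu z δ, V => (inst δ (Function.update V z ∅)).image (.mu z) ∪
      (inst δ (Function.update V z ∅)).image (.nu z)
  | .nu z δ, V => (inst δ (Function.update V z ∅)).image (.mu z) ∪
      (inst δ (Function.update V z ∅)).image (.nu z)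

/-- the closure over-approximation within an `fv`-constant regime `K` -/
def CLO (K : Finset ℕ) : Formula → (ℕ → Finset Formula) → Finset Formula
  | .atom p, V => inst (.atom p) V
  | .natom p, V => inst (.natom p) V
  | .or a b, V => inst (.or a b) V ∪ CLO K a V ∪ CLO K b V
  | .and a b, V => inst (.and a b) V ∪ CLO K a V ∪ CLO K b V
  | .dia a, V => inst (.dia a) V ∪ CLO K a V
  | .box a, V => inst (.box a) V ∪ CLO K a V
  | .mu z δ, V => inst (.mu z δ) V ∪
      CLO K δ (Function.update V z
        (if z ∈ K then ∅ else (inst (.mu z δ) V).filter (fun v => fv v ⊆ K)))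
  | .nu z δ, V => inst (.nu z δ) V ∪
      CLO K δ (Function.update V z
        (if z ∈ K then ∅ else (inst (.nu z δ) V).filter (fun v => fv v ⊆ K)))

theorem inst_subset_CLO (K : Finset ℕ) (δ : Formula) (V : ℕ → Finset Formula) :
    inst δ V ⊆ CLO K δ V := by
  cases δ <;> simp [CLO, Finset.subset_union_left]

theorem self_mem_inst (δ : Formula) (V : ℕ → Finset Formula) : δ ∈ inst δ V := by
  induction δ generalizing V with
  | atom p => simp [inst]
  | natom p => simp [inst]
  | or a b iha ihb =>
    simp only [inst, Finset.mem_union]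
    exact Or.inl (Finset.mem_image.2 ⟨(a, b), Finset.mem_product.2 ⟨iha V, ihb V⟩, rfl⟩)
  | and a b iha ihb =>
    simp only [inst, Finset.mem_union]
    exact Or.inr (Finset.mem_image.2 ⟨(a, b), Finset.mem_product.2 ⟨iha V, ihb V⟩, rfl⟩)
  | dia a ih =>
    simp only [inst, Finset.mem_union]
    exact Or.inl (Finset.mem_image.2 ⟨a, ih V, rfl⟩)
  | box a ih =>
    simp only [inst, Finset.mem_union]
    exact Or.inr (Finset.mem_image.2 ⟨a, ih V, rfl⟩)
  | mu z δ ih =>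
    simp only [inst, Finset.mem_union]
    exact Or.inl (Finset.mem_image.2 ⟨δ, ih _, rfl⟩)
  | nu z δ ih =>
    simp only [inst, Finset.mem_union]
    exact Or.inr (Finset.mem_image.2 ⟨δ, ih _, rfl⟩)

/-- `inst` is closed under the `negF` variants, provided all value sets are. -/
theorem negF_mem_inst {δ w : Formula} {V : ℕ → Finset Formula}
    (horb : ∀ q, ∀ u ∈ V q, ∀ Y : Finset ℕ, negF Y u ∈ V q)
    (hw : w ∈ inst δ V) (X : Finset ℕ) : negF X w ∈ inst δ V := by
  induction δ generalizing w V X with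
  | atom p =>
    simp only [inst, Finset.mem_union, Finset.mem_insert, Finset.mem_singleton] at hw ⊢
    rcases hw with (rfl | rfl) | hw
    · by_cases h : p ∈ X <;> simp [negF, h]
    · by_cases h : p ∈ X <;> simp [negF, h]
    · exact Or.inr (horb p w hw X)
  | natom p =>
    simp only [inst, Finset.mem_union, Finset.mem_insert, Finset.mem_singleton] at hw ⊢
    rcases hw with (rfl | rfl) | hw
    · by_cases h : p ∈ X <;> simp [negF, h]
    · by_cases h : p ∈ X <;> simp [negF, h]
    · exact Or.inr (horb p w hw X)
  | or a b iha ihb =>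
    simp only [inst, Finset.mem_union, Finset.mem_image] at hw ⊢
    rcases hw with ⟨⟨u, v⟩, huv, rfl⟩ | ⟨⟨u, v⟩, huv, rfl⟩ <;>
      rcases Finset.mem_product.1 huv with ⟨hu, hv⟩
    · exact Or.inr ⟨(negF X u, negF X v),
        Finset.mem_product.2 ⟨iha horb hu X, ihb horb hv X⟩, rfl⟩
    · exact Or.inl ⟨(negF X u, negF X v),
        Finset.mem_product.2 ⟨iha horb hu X, ihb horb hv X⟩, rfl⟩
  | and a b iha ihb =>
    simp only [inst, Finset.mem_union, Finset.mem_image] at hw ⊢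
    rcases hw with ⟨⟨u, v⟩, huv, rfl⟩ | ⟨⟨u, v⟩, huv, rfl⟩ <;>
      rcases Finset.mem_product.1 huv with ⟨hu, hv⟩
    · exact Or.inr ⟨(negF X u, negF X v),
        Finset.mem_product.2 ⟨iha horb hu X, ihb horb hv X⟩, rfl⟩
    · exact Or.inl ⟨(negF X u, negF X v),
        Finset.mem_product.2 ⟨iha horb hu X, ihb horb hv X⟩, rfl⟩
  | dia a ih =>
    simp only [inst, Finset.mem_union, Finset.mem_image] at hw ⊢
    rcases hw with ⟨u, hu, rfl⟩ | ⟨u, hu, rfl⟩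
    · exact Or.inr ⟨negF X u, ih horb hu X, rfl⟩
    · exact Or.inl ⟨negF X u, ih horb hu X, rfl⟩
  | box a ih =>
    simp only [inst, Finset.mem_union, Finset.mem_image] at hw ⊢
    rcases hw with ⟨u, hu, rfl⟩ | ⟨u, hu, rfl⟩
    · exact Or.inr ⟨negF X u, ih horb hu X, rfl⟩
    · exact Or.inl ⟨negF X u, ih horb hu X, rfl⟩
  | mu z δ ih =>
    simp only [inst, Finset.mem_union, Finset.mem_image] at hw ⊢
    have horb2 : ∀ q, ∀ u ∈ (Function.update V z ∅) q, ∀ Y : Finset ℕ,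
        negF Y u ∈ (Function.update V z ∅) q := by
      intro q u hu Y
      by_cases h : q = z
      · subst h; simp [Function.update] at hu
      · simp [Function.update, h] at hu ⊢
        exact horb q u hu Y
    rcases hw with ⟨u, hu, rfl⟩ | ⟨u, hu, rfl⟩
    · exact Or.inr ⟨negF (insert z X) u, ih horb2 hu _, rfl⟩
    · exact Or.inl ⟨negF (insert z X) u, ih horb2 hu _, rfl⟩
  | nu z δ ih =>
    simp only [inst, Finset.mem_union, Finset.mem_image] at hw ⊢
    have horb2 : ∀ q, ∀ u ∈ (Function.update V z ∅) q, ∀ Y : Finset ℕ,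
        negF Y u ∈ (Function.update V z ∅) q := by
      intro q u hu Y
      by_cases h : q = z
      · subst h; simp [Function.update] at hu
      · simp [Function.update, h] at hu ⊢
        exact horb q u hu Y
    rcases hw with ⟨u, hu, rfl⟩ | ⟨u, hu, rfl⟩
    · exact Or.inr ⟨negF (insert z X) u, ih horb2 hu _, rfl⟩
    · exact Or.inl ⟨negF (insert z X) u, ih horb2 hu _, rfl⟩


/-- substituting a value (with its negation) into an instance yields an instance. -/
theorem subst_mem_inst {z : ℕ} {W : Finset Formula} {v : Formula}
    (hv : v ∈ W) (hnv : neg v ∈ W) :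
    ∀ {δ w : Formula} {V : ℕ → Finset Formula},
    w ∈ inst δ (Function.update V z ∅) →
    (∀ q, ∀ u ∈ V q, z ∉ fv u) →
    subst w z v ∈ inst δ (Function.update V z W) := by
  intro δ
  induction δ with
  | atom p =>
    intro w V hw hvals
    simp only [inst, Finset.mem_union, Finset.mem_insert, Finset.mem_singleton] at hw ⊢
    rcases hw with (rfl | rfl) | hw
    · by_cases h : p = z
      · subst h
        simp only [subst, if_pos rfl]
        right
        simpa [Function.update] using hv
      · simp [subst, h]
    · by_cases h : p = z
      · subst h
        simp only [subst, if_pos rfl]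
        right
        simpa [Function.update] using hnv
      · simp [subst, h]
    · by_cases h : p = z
      · subst h; simp [Function.update] at hw
      · simp only [Function.update, dif_neg h] at hw
        have : z ∉ fv w := hvals p w hw
        rw [subst_of_not_mem_fv v this]
        right
        simpa [Function.update, h] using hw
  | natom p =>
    intro w V hw hvals
    simp only [inst, Finset.mem_union, Finset.mem_insert, Finset.mem_singleton] at hw ⊢
    rcases hw with (rfl | rfl) | hw
    · by_cases h : p = z
      · subst h
        simp only [subst, if_pos rfl]
        right
        simpa [Function.update] using hv
      · simp [subst, h]
    · by_cases h : p = z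
      · subst h
        simp only [subst, if_pos rfl]
        right
        simpa [Function.update] using hnv
      · simp [subst, h]
    · by_cases h : p = z
      · subst h; simp [Function.update] at hw
      · simp only [Function.update, dif_neg h] at hw
        have : z ∉ fv w := hvals p w hw
        rw [subst_of_not_mem_fv v this]
        right
        simpa [Function.update, h] using hw
  | or a b iha ihb =>
    intro w V hw hvals
    simp only [inst, Finset.mem_union, Finset.mem_image] at hw ⊢
    rcases hw with ⟨⟨u, u'⟩, huv, rfl⟩ | ⟨⟨u, u'⟩, huv, rfl⟩ <;>
      rcases Finset.mem_product.1 huv with ⟨hu, hu'⟩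
    · exact Or.inl ⟨(subst u z v, subst u' z v),
        Finset.mem_product.2 ⟨iha hu hvals, ihb hu' hvals⟩, rfl⟩
    · exact Or.inr ⟨(subst u z v, subst u' z v),
        Finset.mem_product.2 ⟨iha hu hvals, ihb hu' hvals⟩, rfl⟩
  | and a b iha ihb =>
    intro w V hw hvals
    simp only [inst, Finset.mem_union, Finset.mem_image] at hw ⊢
    rcases hw with ⟨⟨u, u'⟩, huv, rfl⟩ | ⟨⟨u, u'⟩, huv, rfl⟩ <;>
      rcases Finset.mem_product.1 huv with ⟨hu, hu'⟩
    · exact Or.inl ⟨(subst u z v, subst u' z v),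
        Finset.mem_product.2 ⟨iha hu hvals, ihb hu' hvals⟩, rfl⟩
    · exact Or.inr ⟨(subst u z v, subst u' z v),
        Finset.mem_product.2 ⟨iha hu hvals, ihb hu' hvals⟩, rfl⟩
  | dia a ih =>
    intro w V hw hvals
    simp only [inst, Finset.mem_union, Finset.mem_image] at hw ⊢
    rcases hw with ⟨u, hu, rfl⟩ | ⟨u, hu, rfl⟩
    · exact Or.inl ⟨subst u z v, ih hu hvals, rfl⟩
    · exact Or.inr ⟨subst u z v, ih hu hvals, rfl⟩
  | box a ih =>
    intro w V hw hvals
    simp only [inst, Finset.mem_union, Finset.mem_image] at hw ⊢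
    rcases hw with ⟨u, hu, rfl⟩ | ⟨u, hu, rfl⟩
    · exact Or.inl ⟨subst u z v, ih hu hvals, rfl⟩
    · exact Or.inr ⟨subst u z v, ih hu hvals, rfl⟩
  | mu y δ ih =>
    intro w V hw hvals
    simp only [inst, Finset.mem_union, Finset.mem_image] at hw ⊢
    by_cases hyz : y = z
    · subst hyz
      rcases hw with ⟨u, hu, rfl⟩ | ⟨u, hu, rfl⟩
      · refine Or.inl ⟨u, ?_, by simp [subst]⟩
        rwa [Function.update_idem] at hu ⊢
      · refine Or.inr ⟨u, ?_, by simp [subst]⟩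
        rwa [Function.update_idem] at hu ⊢
    · have hcomm : Function.update (Function.update V z ∅) y (∅ : Finset Formula) =
          Function.update (Function.update V y ∅) z ∅ :=
        Function.update_comm (fun h => hyz h.symm) _ _ _
      have hcomm2 : Function.update (Function.update V y ∅) z W =
          Function.update (Function.update V z W) y ∅ :=
        Function.update_comm hyz _ _ _
      have hvals' : ∀ q, ∀ u ∈ (Function.update V y ∅) q, z ∉ fv u := by
        intro q u hu
        by_cases h : q = y
        · subst h; simp [Function.update] at hu
        · simp only [Function.update, dif_neg h] at hu
          exact hvals q u hu
      rcases hw with ⟨u, hu, rfl⟩ | ⟨u, hu, rfl⟩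
      · rw [hcomm] at hu
        have := ih hu hvals'
        rw [hcomm2] at this
        exact Or.inl ⟨subst u z v, this, by simp [subst, hyz]⟩
      · rw [hcomm] at hu
        have := ih hu hvals'
        rw [hcomm2] at this
        exact Or.inr ⟨subst u z v, this, by simp [subst, hyz]⟩
  | nu y δ ih =>
    intro w V hw hvals
    simp only [inst, Finset.mem_union, Finset.mem_image] at hw ⊢
    by_cases hyz : y = z
    · subst hyz
      rcases hw with ⟨u, hu, rfl⟩ | ⟨u, hu, rfl⟩
      · refine Or.inl ⟨u, ?_, by simp [subst]⟩
        rwa [Function.update_idem] at hu ⊢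
      · refine Or.inr ⟨u, ?_, by simp [subst]⟩
        rwa [Function.update_idem] at hu ⊢
    · have hcomm : Function.update (Function.update V z ∅) y (∅ : Finset Formula) =
          Function.update (Function.update V y ∅) z ∅ :=
        Function.update_comm (fun h => hyz h.symm) _ _ _
      have hcomm2 : Function.update (Function.update V y ∅) z W =
          Function.update (Function.update V z W) y ∅ :=
        Function.update_comm hyz _ _ _
      have hvals' : ∀ q, ∀ u ∈ (Function.update V y ∅) q, z ∉ fv u := by
        intro q u hu
        by_cases h : q = y
        · subst h; simp [Function.update] at hu
        · simp only [Function.update, dif_neg h] at hu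
          exact hvals q u hu
      rcases hw with ⟨u, hu, rfl⟩ | ⟨u, hu, rfl⟩
      · rw [hcomm] at hu
        have := ih hu hvals'
        rw [hcomm2] at this
        exact Or.inl ⟨subst u z v, this, by simp [subst, hyz]⟩
      · rw [hcomm] at hu
        have := ih hu hvals'
        rw [hcomm2] at this
        exact Or.inr ⟨subst u z v, this, by simp [subst, hyz]⟩


/-- conditions on a value map within the regime `K` with global target `T` -/
def GoodV (K : Finset ℕ) (T : Finset Formula) (V : ℕ → Finset Formula) : Prop :=
  ∀ q, ∀ u ∈ V q, fv u ⊆ K ∧ (∀ Y : Finset ℕ, negF Y u ∈ V q) ∧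
    (∀ s, step u s → s ∈ T)

theorem CLO_closed (K : Finset ℕ) (T : Finset Formula) :
    ∀ (δ : Formula) (V : ℕ → Finset Formula), CLO K δ V ⊆ T → GoodV K T V →
    ∀ m ∈ CLO K δ V, fv m = K → ∀ s, step m s → s ∈ T := by
  intro δ
  induction δ with
  | atom p =>
    intro V hT hG m hm hfv s hs
    simp only [CLO, inst, Finset.mem_union, Finset.mem_insert, Finset.mem_singleton] at hm
    rcases hm with (rfl | rfl) | hm
    · cases hs
    · cases hs
      exact hT (by simp [CLO, inst])
    · exact (hG p m hm).2.2 s hs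
  | natom p =>
    intro V hT hG m hm hfv s hs
    simp only [CLO, inst, Finset.mem_union, Finset.mem_insert, Finset.mem_singleton] at hm
    rcases hm with (rfl | rfl) | hm
    · cases hs
    · cases hs
      exact hT (by simp [CLO, inst])
    · exact (hG p m hm).2.2 s hs
  | or a b iha ihb =>
    intro V hT hG m hm hfv s hs
    simp only [CLO, Finset.mem_union] at hm
    rcases hm with (hm | hm) | hm
    · simp only [inst, Finset.mem_union, Finset.mem_image] at hm
      rcases hm with ⟨⟨u, u'⟩, huv, rfl⟩ | ⟨⟨u, u'⟩, huv, rfl⟩ <;>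
        rcases Finset.mem_product.1 huv with ⟨hu, hu'⟩ <;> cases hs
      · exact hT (by simp only [CLO, Finset.mem_union]; exact Or.inl (Or.inr (inst_subset_CLO K a V hu)))
      · exact hT (by simp only [CLO, Finset.mem_union]; exact Or.inr (inst_subset_CLO K b V hu'))
      · exact hT (by simp only [CLO, Finset.mem_union]; exact Or.inl (Or.inr (inst_subset_CLO K a V hu)))
      · exact hT (by simp only [CLO, Finset.mem_union]; exact Or.inr (inst_subset_CLO K b V hu'))
    · exact iha V (fun x hx => hT (by simp only [CLO, Finset.mem_union]; exact Or.inl (Or.inr hx))) hG m hm hfv s hs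
    · exact ihb V (fun x hx => hT (by simp only [CLO, Finset.mem_union]; exact Or.inr hx)) hG m hm hfv s hs
  | and a b iha ihb =>
    intro V hT hG m hm hfv s hs
    simp only [CLO, Finset.mem_union] at hm
    rcases hm with (hm | hm) | hm
    · simp only [inst, Finset.mem_union, Finset.mem_image] at hm
      rcases hm with ⟨⟨u, u'⟩, huv, rfl⟩ | ⟨⟨u, u'⟩, huv, rfl⟩ <;>
        rcases Finset.mem_product.1 huv with ⟨hu, hu'⟩ <;> cases hs
      · exact hT (by simp only [CLO, Finset.mem_union]; exact Or.inl (Or.inr (inst_subset_CLO K a V hu)))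
      · exact hT (by simp only [CLO, Finset.mem_union]; exact Or.inr (inst_subset_CLO K b V hu'))
      · exact hT (by simp only [CLO, Finset.mem_union]; exact Or.inl (Or.inr (inst_subset_CLO K a V hu)))
      · exact hT (by simp only [CLO, Finset.mem_union]; exact Or.inr (inst_subset_CLO K b V hu'))
    · exact iha V (fun x hx => hT (by simp only [CLO, Finset.mem_union]; exact Or.inl (Or.inr hx))) hG m hm hfv s hs
    · exact ihb V (fun x hx => hT (by simp only [CLO, Finset.mem_union]; exact Or.inr hx)) hG m hm hfv s hs
  | dia a ih =>
    intro V hT hG m hm hfv s hs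
    simp only [CLO, Finset.mem_union] at hm
    rcases hm with hm | hm
    · simp only [inst, Finset.mem_union, Finset.mem_image] at hm
      rcases hm with ⟨u, hu, rfl⟩ | ⟨u, hu, rfl⟩ <;> cases hs <;>
        exact hT (by simp only [CLO, Finset.mem_union]; exact Or.inr (inst_subset_CLO K a V hu))
    · exact ih V (fun x hx => hT (by simp only [CLO, Finset.mem_union]; exact Or.inr hx)) hG m hm hfv s hs
  | box a ih =>
    intro V hT hG m hm hfv s hs
    simp only [CLO, Finset.mem_union] at hm
    rcases hm with hm | hm
    · simp only [inst, Finset.mem_union, Finset.mem_image] at hm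
      rcases hm with ⟨u, hu, rfl⟩ | ⟨u, hu, rfl⟩ <;> cases hs <;>
        exact hT (by simp only [CLO, Finset.mem_union]; exact Or.inr (inst_subset_CLO K a V hu))
    · exact ih V (fun x hx => hT (by simp only [CLO, Finset.mem_union]; exact Or.inr hx)) hG m hm hfv s hs
  | mu z δ ih =>
    intro V hT hG m hm hfv s hs
    have hsub : CLO K δ (Function.update V z
        (if z ∈ K then ∅ else (inst (.mu z δ) V).filter (fun v => fv v ⊆ K))) ⊆ T :=
      fun x hx => hT (by simp only [CLO, Finset.mem_union]; exact Or.inr hx)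
    have horb : ∀ q, ∀ u ∈ V q, ∀ Y : Finset ℕ, negF Y u ∈ V q :=
      fun q u hu Y => (hG q u hu).2.1 Y
    -- GoodV for the extended map
    have hGext : GoodV K T (Function.update V z
        (if z ∈ K then ∅ else (inst (.mu z δ) V).filter (fun v => fv v ⊆ K))) := by
      intro q u hu
      by_cases hq : q = z
      · subst hq
        rw [Function.update_self] at hu
        by_cases hzK : q ∈ K
        · simp [hzK] at hu
        · simp only [if_neg hzK, Finset.mem_filter] at hu
          obtain ⟨huI, hufv⟩ := hu
          refine ⟨hufv, ?_, ?_⟩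
          · intro Y
            rw [Function.update_self, if_neg hzK]
            exact Finset.mem_filter.2 ⟨negF_mem_inst horb huI Y, by rwa [fv_negF]⟩
          · intro s' hs'
            have hnegu : neg u ∈ (inst (.mu q δ) V).filter (fun v => fv v ⊆ K) :=
              Finset.mem_filter.2 ⟨negF_mem_inst horb huI ∅, by rwa [fv_neg]⟩
            have huW : u ∈ (inst (.mu q δ) V).filter (fun v => fv v ⊆ K) :=
              Finset.mem_filter.2 ⟨huI, hufv⟩
            have hvalsV : ∀ q', ∀ u' ∈ V q', q ∉ fv u' :=
              fun q' u' hu' hz => hzK ((hG q' u' hu').1 hz)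
            simp only [inst, Finset.mem_union, Finset.mem_image] at huI
            rcases huI with ⟨w, hw, rfl⟩ | ⟨w, hw, rfl⟩ <;> cases hs'
            · exact hsub (inst_subset_CLO K δ _ (by
                have := subst_mem_inst huW hnegu hw hvalsV
                simpa [if_neg hzK] using this))
            · exact hsub (inst_subset_CLO K δ _ (by
                have := subst_mem_inst huW hnegu hw hvalsV
                simpa [if_neg hzK] using this))
      · rw [Function.update_of_ne hq] at hu
        obtain ⟨h1, h2, h3⟩ := hG q u hu
        exact ⟨h1, fun Y => by
          rw [Function.update_of_ne hq]
          exact h2 Y, h3⟩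
    simp only [CLO, Finset.mem_union] at hm
    rcases hm with hm | hm
    · -- m is an instance of the fixpoint formula itself; its only step is the unfolding
      have hzK : z ∉ K := by
        intro hzK
        have : z ∉ fv m := by
          simp only [inst, Finset.mem_union, Finset.mem_image] at hm
          rcases hm with ⟨w, _, rfl⟩ | ⟨w, _, rfl⟩ <;> simp [fv]
        rw [hfv] at this
        exact this hzK
      have hmW : m ∈ (inst (.mu z δ) V).filter (fun v => fv v ⊆ K) :=
        Finset.mem_filter.2 ⟨hm, by rw [hfv]⟩
      have hnegm : neg m ∈ (inst (.mu z δ) V).filter (fun v => fv v ⊆ K) :=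
        Finset.mem_filter.2 ⟨negF_mem_inst horb hm ∅, by rw [fv_neg, hfv]⟩
      have hvalsV : ∀ q', ∀ u' ∈ V q', z ∉ fv u' :=
        fun q' u' hu' hz => hzK ((hG q' u' hu').1 hz)
      simp only [inst, Finset.mem_union, Finset.mem_image] at hm
      rcases hm with ⟨w, hw, rfl⟩ | ⟨w, hw, rfl⟩ <;> cases hs
      · exact hsub (inst_subset_CLO K δ _ (by
          have := subst_mem_inst hmW hnegm hw hvalsV
          simpa [if_neg hzK] using this))
      · exact hsub (inst_subset_CLO K δ _ (by
          have := subst_mem_inst hmW hnegm hw hvalsV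
          simpa [if_neg hzK] using this))
    · exact ih _ hsub hGext m hm hfv s hs
  | nu z δ ih =>
    intro V hT hG m hm hfv s hs
    have hsub : CLO K δ (Function.update V z
        (if z ∈ K then ∅ else (inst (.nu z δ) V).filter (fun v => fv v ⊆ K))) ⊆ T :=
      fun x hx => hT (by simp only [CLO, Finset.mem_union]; exact Or.inr hx)
    have horb : ∀ q, ∀ u ∈ V q, ∀ Y : Finset ℕ, negF Y u ∈ V q :=
      fun q u hu Y => (hG q u hu).2.1 Y
    have hGext : GoodV K T (Function.update V z
        (if z ∈ K then ∅ else (inst (.nu z δ) V).filter (fun v => fv v ⊆ K))) := by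
      intro q u hu
      by_cases hq : q = z
      · subst hq
        rw [Function.update_self] at hu
        by_cases hzK : q ∈ K
        · simp [hzK] at hu
        · simp only [if_neg hzK, Finset.mem_filter] at hu
          obtain ⟨huI, hufv⟩ := hu
          refine ⟨hufv, ?_, ?_⟩
          · intro Y
            rw [Function.update_self, if_neg hzK]
            exact Finset.mem_filter.2 ⟨negF_mem_inst horb huI Y, by rwa [fv_negF]⟩
          · intro s' hs'
            have hnegu : neg u ∈ (inst (.nu q δ) V).filter (fun v => fv v ⊆ K) :=
              Finset.mem_filter.2 ⟨negF_mem_inst horb huI ∅, by rwa [fv_neg]⟩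
            have huW : u ∈ (inst (.nu q δ) V).filter (fun v => fv v ⊆ K) :=
              Finset.mem_filter.2 ⟨huI, hufv⟩
            have hvalsV : ∀ q', ∀ u' ∈ V q', q ∉ fv u' :=
              fun q' u' hu' hz => hzK ((hG q' u' hu').1 hz)
            simp only [inst, Finset.mem_union, Finset.mem_image] at huI
            rcases huI with ⟨w, hw, rfl⟩ | ⟨w, hw, rfl⟩ <;> cases hs'
            · exact hsub (inst_subset_CLO K δ _ (by
                have := subst_mem_inst huW hnegu hw hvalsV
                simpa [if_neg hzK] using this))
            · exact hsub (inst_subset_CLO K δ _ (by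
                have := subst_mem_inst huW hnegu hw hvalsV
                simpa [if_neg hzK] using this))
      · rw [Function.update_of_ne hq] at hu
        obtain ⟨h1, h2, h3⟩ := hG q u hu
        exact ⟨h1, fun Y => by
          rw [Function.update_of_ne hq]
          exact h2 Y, h3⟩
    simp only [CLO, Finset.mem_union] at hm
    rcases hm with hm | hm
    · have hzK : z ∉ K := by
        intro hzK
        have : z ∉ fv m := by
          simp only [inst, Finset.mem_union, Finset.mem_image] at hm
          rcases hm with ⟨w, _, rfl⟩ | ⟨w, _, rfl⟩ <;> simp [fv]
        rw [hfv] at this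
        exact this hzK
      have hmW : m ∈ (inst (.nu z δ) V).filter (fun v => fv v ⊆ K) :=
        Finset.mem_filter.2 ⟨hm, by rw [hfv]⟩
      have hnegm : neg m ∈ (inst (.nu z δ) V).filter (fun v => fv v ⊆ K) :=
        Finset.mem_filter.2 ⟨negF_mem_inst horb hm ∅, by rw [fv_neg, hfv]⟩
      have hvalsV : ∀ q', ∀ u' ∈ V q', z ∉ fv u' :=
        fun q' u' hu' hz => hzK ((hG q' u' hu').1 hz)
      simp only [inst, Finset.mem_union, Finset.mem_image] at hm
      rcases hm with ⟨w, hw, rfl⟩ | ⟨w, hw, rfl⟩ <;> cases hs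
      · exact hsub (inst_subset_CLO K δ _ (by
          have := subst_mem_inst hmW hnegm hw hvalsV
          simpa [if_neg hzK] using this))
      · exact hsub (inst_subset_CLO K δ _ (by
          have := subst_mem_inst hmW hnegm hw hvalsV
          simpa [if_neg hzK] using this))
    · exact ih _ hsub hGext m hm hfv s hs


theorem reach_fv {e s : Formula} (h : Relation.ReflTransGen step e s) : fv s ⊆ fv e := by
  induction h with
  | refl => exact subset_rfl
  | tail _ hs ih => exact (step_fv_subset hs).trans ih

theorem reach_decomp {e s : Formula} (h : Relation.ReflTransGen step e s) :
    (fv s = fv e ∧ s ∈ CLO (fv e) e (fun _ => ∅)) ∨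
    ∃ m s', m ∈ CLO (fv e) e (fun _ => ∅) ∧ fv m = fv e ∧ step m s' ∧ fv s' ≠ fv e ∧
      Relation.ReflTransGen step s' s := by
  induction h with
  | refl => exact Or.inl ⟨rfl, inst_subset_CLO _ _ _ (self_mem_inst e _)⟩
  | @tail m s' hm hs ih =>
    rcases ih with ⟨hfvm, hmT⟩ | ⟨m0, s0, h1, h2, h3, h4, h5⟩
    · by_cases hfv : fv s' = fv e
      · exact Or.inl ⟨hfv, CLO_closed _ _ e _ subset_rfl
          (fun q u hu => absurd hu (Finset.notMem_empty u)) m hmT hfvm s' hs⟩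
      · exact Or.inr ⟨m, s', hmT, hfvm, hs, hfv, .refl⟩
    · exact Or.inr ⟨m0, s0, h1, h2, h3, h4, h5.tail hs⟩

theorem reach_finite : ∀ (n : ℕ) (e : Formula), (fv e).card ≤ n →
    {s | Relation.ReflTransGen step e s}.Finite := by
  intro n
  induction n with
  | zero =>
    intro e he
    refine Set.Finite.subset (Finset.finite_toSet (CLO (fv e) e (fun _ => ∅))) ?_
    intro s hs
    rcases reach_decomp hs with ⟨_, h⟩ | ⟨m, s', _, h2, h3, h4, _⟩
    · exact h
    · exfalso
      have hK : fv e = ∅ := Finset.card_eq_zero.1 (Nat.le_zero.1 he)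
      have hsub := step_fv_subset h3
      rw [h2, hK] at hsub
      exact h4 (by rw [hK]; exact Finset.subset_empty.1 hsub)
  | succ n ihn =>
    intro e he
    have main : {s | Relation.ReflTransGen step e s} ⊆
        ↑(CLO (fv e) e (fun _ => ∅)) ∪
        ⋃ m ∈ (↑(CLO (fv e) e (fun _ => ∅)) : Set Formula),
          ⋃ s' ∈ {x | step m x ∧ fv m = fv e ∧ fv x ≠ fv e},
            {s | Relation.ReflTransGen step s' s} := by
      intro s hs
      rcases reach_decomp hs with ⟨_, h⟩ | ⟨m, s', h1, h2, h3, h4, h5⟩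
      · exact Or.inl h
      · exact Or.inr (Set.mem_biUnion h1 (Set.mem_biUnion ⟨h3, h2, h4⟩ h5))
    refine Set.Finite.subset (Set.Finite.union (Finset.finite_toSet _) ?_) main
    refine Set.Finite.biUnion (Finset.finite_toSet _) (fun m _ => ?_)
    refine Set.Finite.biUnion (Set.Finite.subset (step_finite m) (fun x hx => hx.1)) ?_
    rintro s' ⟨hst, hm, hne⟩
    apply ihn
    have hsub : fv s' ⊆ fv e := hm ▸ step_fv_subset hst
    have hlt := Finset.card_lt_card (ssubset_of_subset_of_ne hsub hne)
    omega

end FLfin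

theorem FL_closure_finite' (Φ : Set Formula) (hΦ : Φ.Finite) : (Cl Φ).Finite := by
  have hsub : Cl Φ ⊆ ⋃ φ ∈ Φ, {s | Relation.ReflTransGen FLfin.step φ s} := by
    intro ψ hψ
    rcases FLfin.FL_iff_reach.1 hψ with ⟨φ, h1, h2⟩
    exact Set.mem_biUnion h1 h2
  exact Set.Finite.subset
    (Set.Finite.biUnion hΦ (fun φ _ => FLfin.reach_finite (fv φ).card φ le_rfl)) hsub


/-- The Fischer-Ladner closure of a finite set of modal μ-calculus
formulas is finite. -/
theorem FL_closure_finite (Φ : Set Formula) (hΦ : Φ.Finite) : (Cl Φ).Finite :=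
  FL_closure_finite' Φ hΦ
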